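/- For all indices i, s and every point (x,v): (∇_i V^s)(x, L(x,v)) = −Σ_q (∇_i L_q)(x,v) g^{sq}(x,v), where ∇_i V^s is the p-representation horizontal covariant derivative of the components V^s and ∇_i L_q is the v-representation horizontal covariant derivative of the components L_q. -/

import Mathlib

/- Coordinate formalization of extended tensor fields in v- and p-representation
   for a generalized Legendre transformation λ(x,v) = (x, L(x,v)). -/

noncomputable section

open scoped BigOperators

/-- A point of the (co)tangent bundle in a single chart: a pair (x, v) or (x, p). -/
abbrev Pt (n : ℕ) := (Fin n → ℝ) × (Fin n → ℝ)

/-- An indexed family of scalar functions (components of a (co)vector field). -/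
abbrev Fam (n : ℕ) := Fin n → Pt n → ℝ

/-- Components Γ^k_{ij} of an extended connection (or of a gauge tensor T^k_{ij}). -/
abbrev Conn (n : ℕ) := Fin n → Fin n → Fin n → Pt n → ℝ

variable {n : ℕ}

/-- Kronecker delta δ^i_j. -/
def kron (i j : Fin n) : ℝ := if i = j then 1 else 0

/-- Partial derivative ∂f/∂x^m (first slot). -/
def pdx (m : Fin n) (f : Pt n → ℝ) (q : Pt n) : ℝ :=
  fderiv ℝ f q (Pi.single m 1, 0)

/-- Partial derivative ∂f/∂v^m (resp. ∂f/∂p_m): second slot. -/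
def pdv (m : Fin n) (f : Pt n → ℝ) (q : Pt n) : ℝ :=
  fderiv ℝ f q (0, Pi.single m 1)

/-- The generalized Legendre transformation λ(x,v) = (x, L(x,v)). -/
def lam (L : Fam n) (q : Pt n) : Pt n := (q.1, fun i => L i q)

/-- The inverse map λ⁻¹(x,p) = (x, V(x,p)). -/
def lamInv (V : Fam n) (q : Pt n) : Pt n := (q.1, fun i => V i q)

/-- g_{rk} = ∂L_r/∂v^k. -/
def gdn (L : Fam n) (r k : Fin n) (q : Pt n) : ℝ := pdv k (L r) q

/-- L^i = Σ_q L_q g^{qi}. -/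
def Lup (L : Fam n) (ginv : Fin n → Fin n → Pt n → ℝ) (i : Fin n) (q : Pt n) : ℝ :=
  ∑ j, L j q * ginv j i q

/-- |L|² = Σ_s L_s L^s. -/
def L2 (L : Fam n) (ginv : Fin n → Fin n → Pt n → ℝ) (q : Pt n) : ℝ :=
  ∑ s, L s q * Lup L ginv s q

/-- p-representation: W^i = Σ_s p_s ∂V^s/∂p_i. -/
def Wp (V : Fam n) (i : Fin n) (q : Pt n) : ℝ :=
  ∑ s, q.2 s * pdv i (V s) q

/-- p-representation: Ω = Σ_s p_s W^s. -/
def Omga (V : Fam n) (q : Pt n) : ℝ := ∑ s, q.2 s * Wp V s q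

/-- p-representation projector P̌^i_j = δ^i_j − W^i p_j / Ω. -/
def Pp (V : Fam n) (i j : Fin n) (q : Pt n) : ℝ :=
  kron i j - Wp V i q * q.2 j / Omga V q

/-- v-representation projector P^i_j = δ^i_j − L^i L_j / |L|². -/
def Pv (L : Fam n) (ginv : Fin n → Fin n → Pt n → ℝ) (i j : Fin n) (q : Pt n) : ℝ :=
  kron i j - Lup L ginv i q * L j q / L2 L ginv q

/-- Scalar part of the v-representation horizontal covariant derivative:
    ∂f/∂x^m − Σ_{a,b} v^a Γ^b_{am} ∂f/∂v^b. -/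
def vS (Γ : Conn n) (m : Fin n) (f : Pt n → ℝ) (q : Pt n) : ℝ :=
  pdx m f q - ∑ a, ∑ b, q.2 a * Γ b a m q * pdv b f q

/-- v-representation ∇_m X_j of a covector field. -/
def vCov (Γ : Conn n) (m : Fin n) (X : Fam n) (j : Fin n) (q : Pt n) : ℝ :=
  vS Γ m (X j) q - ∑ b, Γ b m j q * X b q

/-- v-representation ∇_m X^i of a vector field. -/
def vVec (Γ : Conn n) (m : Fin n) (X : Fam n) (i : Fin n) (q : Pt n) : ℝ :=
  vS Γ m (X i) q + ∑ a, Γ i m a q * X a q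

/-- v-representation ∇_k Y_{m r} of a (0,2) tensor field. -/
def vCov2 (Γ : Conn n) (k : Fin n) (Y : Fin n → Fin n → Pt n → ℝ)
    (m r : Fin n) (q : Pt n) : ℝ :=
  vS Γ k (Y m r) q - (∑ b, Γ b k m q * Y b r q) - (∑ b, Γ b k r q * Y m b q)

/-- v-representation ∇_m T^k_{ij} of a (1,2) tensor field. -/
def vT12 (Γ : Conn n) (m : Fin n) (T : Conn n) (k i j : Fin n) (q : Pt n) : ℝ :=
  vS Γ m (T k i j) q + (∑ a, Γ k m a q * T a i j q)
    - (∑ b, Γ b m i q * T k b j q) - (∑ b, Γ b m j q * T k i b q)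

/-- Connection components in p-representation: Γ^k_{ij} ∘ λ⁻¹. -/
def Gp (Γ : Conn n) (V : Fam n) (k i j : Fin n) (q : Pt n) : ℝ :=
  Γ k i j (lamInv V q)

/-- Scalar part of the p-representation horizontal covariant derivative:
    ∂f/∂x^m + Σ_{a,b} p_a Γ^a_{mb} ∂f/∂p_b. -/
def pS (G : Conn n) (m : Fin n) (f : Pt n → ℝ) (q : Pt n) : ℝ :=
  pdx m f q + ∑ a, ∑ b, q.2 a * G a m b q * pdv b f q

/-- p-representation ∇_m X_j of a covector field. -/
def pCov (G : Conn n) (m : Fin n) (X : Fam n) (j : Fin n) (q : Pt n) : ℝ :=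
  pS G m (X j) q - ∑ b, G b m j q * X b q

/-- p-representation ∇_m X^i of a vector field. -/
def pVec (G : Conn n) (m : Fin n) (X : Fam n) (i : Fin n) (q : Pt n) : ℝ :=
  pS G m (X i) q + ∑ a, G i m a q * X a q

/-- Force vector F^i = Φ^i + Σ_{j,k} Γ^i_{jk} v^j v^k. -/
def Fvec (Γ : Conn n) (Φ : Fam n) (i : Fin n) (q : Pt n) : ℝ :=
  Φ i q + ∑ j, ∑ k, Γ i j k q * q.2 j * q.2 k

/-- Force covector F_q = Σ_i g_{qi} F^i. -/
def Fcov (L : Fam n) (Γ : Conn n) (Φ : Fam n) (i : Fin n) (q : Pt n) : ℝ :=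
  ∑ j, gdn L i j q * Fvec Γ Φ j q

/-- p-representation force covector Q_i = Θ_i − Σ_{j,k} Γ^k_{ij} V^j p_k. -/
def Qp (Θ : Fam n) (Γ : Conn n) (V : Fam n) (i : Fin n) (q : Pt n) : ℝ :=
  Θ i q - ∑ j, ∑ k, Gp Γ V k i j q * V j q * q.2 k

/-- p-representation covector Ǔ_i = Q_i + Σ_s (∇_i V^s) p_s. -/
def Ucheck (Θ : Fam n) (Γ : Conn n) (V : Fam n) (i : Fin n) (q : Pt n) : ℝ :=
  Qp Θ Γ V i q + ∑ s, pVec (Gp Γ V) i V s q * q.2 s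

/-- v-representation covector U_i = Σ_q v^q ∇_q L_i − Σ_q L^q ∇_i L_q + F_i. -/
def Uv (L : Fam n) (ginv : Fin n → Fin n → Pt n → ℝ) (Γ : Conn n) (Φ : Fam n)
    (i : Fin n) (q : Pt n) : ℝ :=
  (∑ j, q.2 j * vCov Γ j L i q) - (∑ j, Lup L ginv j q * vCov Γ i L j q) + Fcov L Γ Φ i q

/-- v-representation dynamic curvature tensor D^k_{rij} = −∂Γ^k_{ir}/∂v^j. -/
def Dv (Γ : Conn n) (k r i j : Fin n) (q : Pt n) : ℝ := -(pdv j (Γ k i r) q)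

/-- v-representation curvature tensor R^k_{rij}. -/
def Rv (Γ : Conn n) (k r i j : Fin n) (q : Pt n) : ℝ :=
  pdx i (Γ k j r) q - pdx j (Γ k i r) q
  + (∑ m, (Γ k i m q * Γ m j r q - Γ k j m q * Γ m i r q))
  - (∑ m, ∑ s, q.2 s * Γ m i s q * pdv m (Γ k j r) q)
  + (∑ m, ∑ s, q.2 s * Γ m j s q * pdv m (Γ k i r) q)

/-- p-representation dynamic curvature tensor Ď^{kr}_{ij} = −∂Γ^k_{ij}/∂p_r. -/
def Dp (G : Conn n) (k r i j : Fin n) (q : Pt n) : ℝ := -(pdv r (G k i j) q)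

/-- p-representation curvature tensor Ř^k_{rij}. -/
def Rp (G : Conn n) (k r i j : Fin n) (q : Pt n) : ℝ :=
  pdx i (G k j r) q - pdx j (G k i r) q
  + (∑ m, (G k i m q * G m j r q - G k j m q * G m i r q))
  + (∑ m, ∑ s, q.2 s * G s m i q * pdv m (G k j r) q)
  - (∑ m, ∑ s, q.2 s * G s m j q * pdv m (G k i r) q)

/-- p-representation vector field α̌^k. -/
def alphaCheck (Θ : Fam n) (Γ : Conn n) (V : Fam n) (k : Fin n) (q : Pt n) : ℝ :=
  (∑ r, pdv k (V r) q * Ucheck Θ Γ V r q)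
  + (∑ r, pVec (Gp Γ V) r (Wp V) k q * V r q)
  + (∑ r, pdv r (Wp V k) q * Qp Θ Γ V r q)
  + (∑ r, Wp V r q * pdv k (Qp Θ Γ V r) q)
  - (∑ r, ∑ s, ∑ j, q.2 s * Dp (Gp Γ V) s k r j q * Wp V r q * V j q)

/-- v-representation vector field α^k. -/
def alphaV (L : Fam n) (ginv : Fin n → Fin n → Pt n → ℝ) (Γ : Conn n) (Φ : Fam n)
    (k : Fin n) (q : Pt n) : ℝ :=
  (∑ r, ginv r k q * Uv L ginv Γ Φ r q)
  + (∑ r, q.2 r * vVec Γ r (Lup L ginv) k q)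
  + (∑ j, Fvec Γ Φ j q * pdv j (Lup L ginv k) q)
  + (∑ j, ∑ r, ∑ s, Lup L ginv r q * ginv j k q * q.2 s * pdv j (vCov Γ s L r) q)
  + (∑ j, ∑ r, Lup L ginv r q * ginv j k q * pdv j (Fcov L Γ Φ r) q)
  + (∑ j, ∑ r, Lup L ginv r q * ginv j k q * vCov Γ j L r q)
  - (∑ j, ∑ m, ∑ r, ∑ s, ginv m k q * L s q * Dv Γ s r j m q * Lup L ginv r q * q.2 j)

/-- p-representation covector field β̌_k. -/
def betaCheck (Θ : Fam n) (Γ : Conn n) (V : Fam n) (k : Fin n) (q : Pt n) : ℝ :=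
  (∑ r, pCov (Gp Γ V) r (Ucheck Θ Γ V) k q * V r q)
  + (∑ r, pdv r (Ucheck Θ Γ V k) q * Qp Θ Γ V r q)
  + (∑ r, pVec (Gp Γ V) k V r q * Ucheck Θ Γ V r q)
  + (∑ r, pCov (Gp Γ V) k (Qp Θ Γ V) r q * Wp V r q)
  - (∑ r, ∑ s, ∑ m, (Rp (Gp Γ V) s r m k q * V m q
      - Dp (Gp Γ V) s m r k q * Qp Θ Γ V m q) * Wp V r q * q.2 s)

/-- v-representation covector field β_k. -/
def betaV (L : Fam n) (ginv : Fin n → Fin n → Pt n → ℝ) (Γ : Conn n) (Φ : Fam n)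
    (k : Fin n) (q : Pt n) : ℝ :=
  (∑ r, q.2 r * vCov Γ r (Uv L ginv Γ Φ) k q)
  + (∑ j, Fvec Γ Φ j q * pdv j (Uv L ginv Γ Φ k) q)
  - (∑ j, ∑ r, ∑ s, vCov Γ k L j q * ginv r j q * q.2 s * vCov Γ s L r q)
  - (∑ j, ∑ r, vCov Γ k L j q * ginv r j q * Fcov L Γ Φ r q)
  + (∑ r, Lup L ginv r q * vCov Γ k (Fcov L Γ Φ) r q)
  + (∑ m, ∑ r, Lup L ginv r q * q.2 m * vCov2 Γ k (fun m' r' => vCov Γ m' L r') m r q)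
  - (∑ j, ∑ r, ∑ s, Lup L ginv r q * vCov Γ k L j q * ginv s j q * pdv s (Fcov L Γ Φ r) q)
  - (∑ j, ∑ m, ∑ r, ∑ s, Lup L ginv r q * vCov Γ k L j q * ginv s j q * q.2 m
      * pdv s (vCov Γ m L r) q)
  - (∑ r, ∑ s, ∑ m, Rv Γ s r m k q * q.2 m * Lup L ginv r q * L s q)
  + (∑ j, ∑ r, ∑ s, ∑ m, ∑ a, ginv a j q * vCov Γ k L j q * Dv Γ s m r a q * q.2 m
      * Lup L ginv r q * L s q)
  + (∑ r, ∑ s, ∑ m, ∑ a, ginv a m q * Dv Γ s r k a q * Fcov L Γ Φ m q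
      * Lup L ginv r q * L s q)

/-- v-representation covector field η_k = β_k − Σ_s U_k α^s L_s / |L|². -/
def etaV (L : Fam n) (ginv : Fin n → Fin n → Pt n → ℝ) (Γ : Conn n) (Φ : Fam n)
    (k : Fin n) (q : Pt n) : ℝ :=
  betaV L ginv Γ Φ k q
    - ∑ s, Uv L ginv Γ Φ k q * alphaV L ginv Γ Φ s q * L s q / L2 L ginv q

/-- p-representation tensor Ǎ^{rs} = ∂W^s/∂p_r. -/
def Acheck (V : Fam n) (r s : Fin n) (q : Pt n) : ℝ := pdv r (Wp V s) q

/-- v-representation tensor A^{rs} = Σ_q g^{qr} ∂L^s/∂v^q. -/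
def Av (L : Fam n) (ginv : Fin n → Fin n → Pt n → ℝ) (r s : Fin n) (q : Pt n) : ℝ :=
  ∑ j, ginv j r q * pdv j (Lup L ginv s) q

/-- p-representation tensor B̌^r_s. -/
def Bcheck (Θ : Fam n) (Γ : Conn n) (V : Fam n) (r s : Fin n) (q : Pt n) : ℝ :=
  pdv r (Ucheck Θ Γ V s) q
  + (∑ m, ∑ k, Wp V k q * q.2 m * Dp (Gp Γ V) m r k s q)
  - pVec (Gp Γ V) s (Wp V) r q
  + (∑ m, (pdv m (Wp V r) q - pdv r (Wp V m) q) * Ucheck Θ Γ V s q * q.2 m / Omga V q)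

/-- v-representation tensor B^r_s. -/
def Bv (L : Fam n) (ginv : Fin n → Fin n → Pt n → ℝ) (Γ : Conn n) (Φ : Fam n)
    (r s : Fin n) (q : Pt n) : ℝ :=
  (∑ j, ginv j r q * pdv j (Uv L ginv Γ Φ s) q)
  + (∑ m, ∑ k, ∑ j, ginv j r q * Lup L ginv k q * L m q * Dv Γ m k s j q)
  - vVec Γ s (Lup L ginv) r q
  + (∑ j, ∑ k, vCov Γ s L k q * ginv j k q * pdv j (Lup L ginv r) q)
  + (∑ j, ∑ m, (ginv j m q * pdv j (Lup L ginv r) q - ginv j r q * pdv j (Lup L ginv m) q)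
      * Uv L ginv Γ Φ s q * L m q / L2 L ginv q)

/-- p-representation tensor Č_{rs}. -/
def Ccheck (Θ : Fam n) (Γ : Conn n) (V : Fam n) (r s : Fin n) (q : Pt n) : ℝ :=
  pCov (Gp Γ V) r (Ucheck Θ Γ V) s q
  - (∑ m, (Ucheck Θ Γ V r q * pdv m (Ucheck Θ Γ V s) q
      + Ucheck Θ Γ V s q * pVec (Gp Γ V) r (Wp V) m q) * q.2 m / Omga V q)
  - (∑ k, ∑ j, ((∑ m, Dp (Gp Γ V) m j k s q * Ucheck Θ Γ V r q * q.2 m / Omga V q)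
      + Rp (Gp Γ V) j k r s q / 2) * Wp V k q * q.2 j)

/-- v-representation tensor C_{rs}. -/
def Cv (L : Fam n) (ginv : Fin n → Fin n → Pt n → ℝ) (Γ : Conn n) (Φ : Fam n)
    (r s : Fin n) (q : Pt n) : ℝ :=
  vCov Γ r (Uv L ginv Γ Φ) s q
  - (∑ j, ∑ k, vCov Γ r L j q * ginv k j q * pdv k (Uv L ginv Γ Φ s) q)
  - (∑ m, Uv L ginv Γ Φ s q * vVec Γ r (Lup L ginv) m q * L m q / L2 L ginv q)
  - (∑ j, ∑ m, Uv L ginv Γ Φ r q * ginv j m q * pdv j (Uv L ginv Γ Φ s) q * L m q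
      / L2 L ginv q)
  + (∑ m, ∑ j, ∑ k, Uv L ginv Γ Φ s q * vCov Γ r L k q * ginv j k q
      * pdv j (Lup L ginv m) q * L m q / L2 L ginv q)
  - (∑ k, ∑ j, ∑ m, ∑ a, ginv a j q * Dv Γ m k s a q * Uv L ginv Γ Φ r q * L m q
      * Lup L ginv k q * L j q / L2 L ginv q)
  - (∑ k, ∑ j, (Rv Γ j k r s q / 2) * Lup L ginv k q * L j q)
  - (∑ k, ∑ j, ∑ m, ∑ a, vCov Γ r L m q * Dv Γ j k s a q * ginv a m q
      * Lup L ginv k q * L j q)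

/-- Gauge-transformed connection Γ' = Γ + T. -/
def addT (Γ T : Conn n) : Conn n := fun k i j q => Γ k i j q + T k i j q

/-- The quantity Ξ_{rs} appearing in the gauge transformation rule for C. -/
def XiG (L : Fam n) (ginv : Fin n → Fin n → Pt n → ℝ) (Γ : Conn n) (Φ : Fam n)
    (T : Conn n) (r s : Fin n) (q : Pt n) : ℝ :=
  (∑ j, ∑ b, ∑ m, T b r j q * L b q * Pv L ginv j m q * Bv L ginv Γ Φ m s q)
  + (∑ j, ∑ b, ∑ m, ∑ a, ∑ c, ∑ e, T b r j q * L b q * Pv L ginv j m q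
      * Av L ginv m a q * Pv L ginv c a q * T e s c q * L e q)

end

section stmt2aux

variable {n : ℕ}

lemma lam_hasFDerivAt (L : Fam n) (hL : ∀ i, ContDiff ℝ (⊤ : ℕ∞) (L i)) (q : Pt n) :
    HasFDerivAt (lam L)
      ((ContinuousLinearMap.fst ℝ (Fin n → ℝ) (Fin n → ℝ)).prod
        (ContinuousLinearMap.pi fun i => fderiv ℝ (L i) q)) q := by
  refine HasFDerivAt.prodMk hasFDerivAt_fst ?_
  rw [hasFDerivAt_pi']
  intro i
  rw [ContinuousLinearMap.proj_pi]
  exact ((hL i).differentiable (by simp) q).hasFDerivAt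

lemma clm_snd_apply (D : Pt n →L[ℝ] ℝ) (w : Fin n → ℝ) :
    D (0, w) = ∑ b, w b * D (0, Pi.single b 1) := by
  have hw : ((0 : Fin n → ℝ), w) = ∑ b, w b • (((0 : Fin n → ℝ), (Pi.single b (1 : ℝ) : Fin n → ℝ)) : Pt n) := by
    refine Prod.ext ?_ ?_
    · simp [Prod.fst_sum]
    · simp only [Prod.snd_sum, Prod.smul_mk]
      funext j
      simp [Pi.single_apply]
  rw [hw, map_sum]
  simp only [map_smul, smul_eq_mul]

lemma chain_key (L V : Fam n)
    (hL : ∀ i, ContDiff ℝ (⊤ : ℕ∞) (L i))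
    (hV : ∀ i, ContDiff ℝ (⊤ : ℕ∞) (V i))
    (hLeft : ∀ q : Pt n, lamInv V (lam L q) = q)
    (q : Pt n) (s : Fin n) (dx dv : Fin n → ℝ) :
    fderiv ℝ (V s) (lam L q) (dx, fun b => fderiv ℝ (L b) q (dx, dv)) = dv s := by
  have hVd : DifferentiableAt ℝ (V s) (lam L q) := (hV s).differentiable (by simp) _
  have hchain := hVd.hasFDerivAt.comp q (lam_hasFDerivAt L hL q)
  have heq : (V s) ∘ (lam L) = fun r : Pt n => r.2 s :=
    funext
      fun r => congrFun (congrArg Prod.snd (hLeft r)) s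
  rw [heq] at hchain
  have h2 : HasFDerivAt (fun r : Pt n => r.2 s)
      ((ContinuousLinearMap.proj s).comp
        (ContinuousLinearMap.snd ℝ (Fin n → ℝ) (Fin n → ℝ))) q := by
    have h := ((ContinuousLinearMap.proj s).comp
        (ContinuousLinearMap.snd ℝ (Fin n → ℝ) (Fin n → ℝ))).hasFDerivAt (x := q)
    exact h
  have huniq := hchain.unique h2
  have happ := congrFun (congrArg (DFunLike.coe) huniq) (dx, dv)
  simpa using happ

end stmt2aux

theorem stmt2
    (n : ℕ) (hn : 2 ≤ n)
    (L V : Fam n) (ginv : Fin n → Fin n → Pt n → ℝ)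
    (hL : ∀ i, ContDiff ℝ (⊤ : ℕ∞) (L i))
    (hV : ∀ i, ContDiff ℝ (⊤ : ℕ∞) (V i))
    (hginvSm : ∀ i j, ContDiff ℝ (⊤ : ℕ∞) (ginv i j))
    (hLeft : ∀ q : Pt n, lamInv V (lam L q) = q)
    (hRight : ∀ q : Pt n, lam L (lamInv V q) = q)
    (hginv : ∀ (q : Pt n) (s k : Fin n), (∑ r, ginv s r q * gdn L r k q) = kron s k)
    (Γ : Conn n)
    (hΓ : ∀ k i j, ContDiff ℝ (⊤ : ℕ∞) (Γ k i j))
    (hΓsym : ∀ (k i j : Fin n) (q : Pt n), Γ k i j q = Γ k j i q) :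
    ∀ (q : Pt n) (i s : Fin n),
      pVec (Gp Γ V) i V s (lam L q) = -∑ j, vCov Γ i L j q * ginv s j q := by
  intro q i s
  classical
  have hVL : ∀ a : Fin n, V a (lam L q) = q.2 a :=
    fun a => congrFun (congrArg Prod.snd (hLeft q)) a
  -- the matrix of partials of V at lam L q equals ginv
  have hMg : ∀ a k : Fin n, (∑ b, gdn L b k q * pdv b (V a) (lam L q)) = kron a k := by
    intro a k
    have h := chain_key L V hL hV hLeft q a 0 (Pi.single k 1)
    rw [clm_snd_apply (fderiv ℝ (V a) (lam L q))] at h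
    have h' : (∑ b, gdn L b k q * pdv b (V a) (lam L q)) = (Pi.single k (1 : ℝ) : Fin n → ℝ) a := by
      simp only [gdn, pdv]
      exact h
    rw [h']
    simp [kron, Pi.single_apply]
  have hA : (Matrix.of fun a b => ginv a b q) * (Matrix.of fun a b => gdn L a b q) = 1 := by
    ext a b
    simpa [Matrix.mul_apply, Matrix.one_apply, kron] using hginv q a b
  have hM : (Matrix.of fun a b => pdv b (V a) (lam L q))
      * (Matrix.of fun a b => gdn L a b q) = 1 := by
    ext a b
    have := hMg a b
    simp only [Matrix.mul_apply, Matrix.of_apply, Matrix.one_apply]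
    calc (∑ j, pdv j (V a) (lam L q) * gdn L j b q)
        = ∑ j, gdn L j b q * pdv j (V a) (lam L q) :=
          Finset.sum_congr rfl fun j _ => mul_comm _ _
      _ = kron a b := hMg a b
      _ = if a = b then 1 else 0 := rfl
  have hBA := mul_eq_one_comm.mp hA
  have hMA : (Matrix.of fun a b => pdv b (V a) (lam L q))
      = (Matrix.of fun a b => ginv a b q) := by
    calc (Matrix.of fun a b => pdv b (V a) (lam L q))
        = (Matrix.of fun a b => pdv b (V a) (lam L q))
          * ((Matrix.of fun a b => gdn L a b q) * (Matrix.of fun a b => ginv a b q)) := by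
            rw [hBA, mul_one]
      _ = ((Matrix.of fun a b => pdv b (V a) (lam L q))
          * (Matrix.of fun a b => gdn L a b q)) * (Matrix.of fun a b => ginv a b q) := by
            rw [mul_assoc]
      _ = (Matrix.of fun a b => ginv a b q) := by rw [hM, one_mul]
  have hpdvV : ∀ a b : Fin n, pdv b (V a) (lam L q) = ginv a b q := by
    intro a b
    exact congrFun (congrFun hMA a) b
  -- pdx of V
  have hpdxV : pdx i (V s) (lam L q) = -∑ b, pdx i (L b) q * ginv s b q := by
    have h := chain_key L V hL hV hLeft q s (Pi.single i 1) 0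
    have hsplit : ((Pi.single i (1 : ℝ) : Fin n → ℝ),
          fun b => fderiv ℝ (L b) q ((Pi.single i (1 : ℝ) : Fin n → ℝ), (0 : Fin n → ℝ)))
        = (((Pi.single i (1 : ℝ) : Fin n → ℝ), (0 : Fin n → ℝ)) : Pt n)
          + (((0 : Fin n → ℝ),
              fun b => fderiv ℝ (L b) q
                ((Pi.single i (1 : ℝ) : Fin n → ℝ), (0 : Fin n → ℝ))) : Pt n) := by
      simp [Prod.ext_iff]
    rw [hsplit, map_add, clm_snd_apply (fderiv ℝ (V s) (lam L q))] at h
    have hsum : (∑ b, fderiv ℝ (L b) q ((Pi.single i (1 : ℝ) : Fin n → ℝ), (0 : Fin n → ℝ))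
          * fderiv ℝ (V s) (lam L q) ((0 : Fin n → ℝ), Pi.single b 1))
        = ∑ b, pdx i (L b) q * ginv s b q :=
      Finset.sum_congr rfl fun b _ => by rw [← hpdvV s b]; rfl
    rw [hsum] at h
    have h0 : (0 : Fin n → ℝ) s = 0 := rfl
    rw [h0] at h
    show fderiv ℝ (V s) (lam L q) (Pi.single i 1, 0) = -∑ b, pdx i (L b) q * ginv s b q
    linarith [h]
  have hG : ∀ a b c : Fin n, Gp Γ V a b c (lam L q) = Γ a b c q := by
    intro a b c; rw [Gp, hLeft q]
  have LHSeq : pVec (Gp Γ V) i V s (lam L q)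
      = (-∑ b, pdx i (L b) q * ginv s b q)
        + (∑ a, ∑ b, L a q * Γ a i b q * ginv s b q)
        + (∑ a, Γ s i a q * q.2 a) := by
    simp only [pVec, pS]
    rw [hpdxV]
    congr 1
    · congr 1
      refine Finset.sum_congr rfl fun a _ => Finset.sum_congr rfl fun b _ => ?_
      rw [hG, hpdvV]
      rfl
    · refine Finset.sum_congr rfl fun a _ => ?_
      rw [hG, hVL]
  have hT2 : (∑ j, (∑ a, ∑ b, q.2 a * Γ b a i q * pdv b (L j) q) * ginv s j q)
      = ∑ a, Γ s i a q * q.2 a := by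
    have step1 : (∑ j, (∑ a, ∑ b, q.2 a * Γ b a i q * pdv b (L j) q) * ginv s j q)
        = ∑ a, ∑ b, (q.2 a * Γ b a i q) * (∑ j, ginv s j q * gdn L j b q) := by
      simp only [Finset.sum_mul, Finset.mul_sum]
      rw [Finset.sum_comm]
      refine Finset.sum_congr rfl fun a _ => ?_
      rw [Finset.sum_comm]
      refine Finset.sum_congr rfl fun b _ => Finset.sum_congr rfl fun j _ => ?_
      show q.2 a * Γ b a i q * pdv b (L j) q * ginv s j q
          = q.2 a * Γ b a i q * (ginv s j q * gdn L j b q)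
      rw [gdn]
      ring
    rw [step1]
    simp only [hginv q s]
    simp only [kron, mul_ite, mul_one, mul_zero, Finset.sum_ite_eq, Finset.mem_univ, if_true]
    refine Finset.sum_congr rfl fun a _ => ?_
    rw [hΓsym s i a q]
    ring
  have hT3 : (∑ j, (∑ b, Γ b i j q * L b q) * ginv s j q)
      = ∑ a, ∑ b, L a q * Γ a i b q * ginv s b q := by
    simp only [Finset.sum_mul]
    rw [Finset.sum_comm]
    exact Finset.sum_congr rfl fun a _ => Finset.sum_congr rfl fun b _ => by ring
  have RHSeq : (-∑ j, vCov Γ i L j q * ginv s j q)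
      = (-∑ b, pdx i (L b) q * ginv s b q)
        + (∑ a, ∑ b, L a q * Γ a i b q * ginv s b q)
        + (∑ a, Γ s i a q * q.2 a) := by
    simp only [vCov, vS]
    have expand : (∑ j, (pdx i (L j) q
          - (∑ a, ∑ b, q.2 a * Γ b a i q * pdv b (L j) q)
          - (∑ b, Γ b i j q * L b q)) * ginv s j q)
        = (∑ j, pdx i (L j) q * ginv s j q)
          - (∑ j, (∑ a, ∑ b, q.2 a * Γ b a i q * pdv b (L j) q) * ginv s j q)
          - (∑ j, (∑ b, Γ b i j q * L b q) * ginv s j q) := by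
      rw [← Finset.sum_sub_distrib, ← Finset.sum_sub_distrib]
      exact Finset.sum_congr rfl fun j _ => by ring
    rw [expand, hT2, hT3]
    ring
  rw [LHSeq]
  exact RHSeq.symm
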